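/- arXiv:2105.02222 — 4 statements merged into one kernel-verified Lean document; each statement's English description precedes it below -/
import Mathlib

section
/- Let S be an M×(M+1) real matrix, b ∈ ℝ^{M+1}, and let N_b be the square matrix obtained by appending bᵀ as last row. If v ∈ ker S, then for every column index j, det(N_b) · v_j = (-1)^{M+1+j} ⟨b, v⟩ · det(S_{∖j}), where S_{∖j} is S with column j removed. -/
open Matrix

/-- Cramer-type identity: for v ∈ ker S and N_b the matrix S with appended row bᵀ,
det(N_b) · v_j = ±⟨b,v⟩ · det(S with column j removed). -/
theorem stmt4 (M : ℕ) (S : Matrix (Fin M) (Fin (M + 1)) ℝ)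
    (v b : Fin (M + 1) → ℝ) (hv : S.mulVec v = 0)
    (Nb : Matrix (Fin (M + 1)) (Fin (M + 1)) ℝ)
    (hNb : Nb = Matrix.of (Fin.snoc S b)) :
    ∀ j : Fin (M + 1),
      Nb.det * v j = (-1 : ℝ) ^ (M + (j : ℕ)) * (b ⬝ᵥ v) * (S.submatrix id j.succAbove).det := by
  intro j
  have hw : Nb.mulVec v = Pi.single (Fin.last M) (b ⬝ᵥ v) := by
    funext i
    refine Fin.lastCases ?_ ?_ i
    · simp [hNb, mulVec, Fin.snoc_last, Pi.single_eq_same, Fin.snoc]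
    · intro i
      have h1 : Nb.mulVec v (Fin.castSucc i) = S.mulVec v i := by
        simp [hNb, mulVec, Fin.snoc_castSucc, Fin.snoc]
      rw [h1, hv]
      simp [Pi.single_eq_of_ne (Fin.castSucc_lt_last i).ne]
  have key : Nb.det • v = Nb.adjugate.mulVec (Nb.mulVec v) := by
    rw [Matrix.mulVec_mulVec, Matrix.adjugate_mul, Matrix.smul_mulVec,
      Matrix.one_mulVec]
  have h2 : Nb.det * v j = Nb.adjugate j (Fin.last M) * (b ⬝ᵥ v) := by
    have := congrFun key j
    rw [hw] at this
    simpa [Matrix.mulVec_single] using this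
  have h3 : Nb.adjugate j (Fin.last M)
      = (-1 : ℝ) ^ (M + (j : ℕ)) * (S.submatrix id j.succAbove).det := by
    rw [Matrix.adjugate_apply]
    rw [Matrix.det_succ_row _ (Fin.last M)]
    rw [Finset.sum_eq_single j]
    · have hsub : (Nb.updateRow (Fin.last M) (Pi.single j 1)).submatrix
          (Fin.last M).succAbove j.succAbove = S.submatrix id j.succAbove := by
        funext i k
        simp [Matrix.submatrix_apply, Fin.succAbove_last, hNb,
          Matrix.updateRow_apply, (Fin.castSucc_lt_last i).ne, Fin.snoc_castSucc, Fin.snoc]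
      rw [hsub]
      simp [Fin.val_last]
    · intro k _ hk
      simp [Matrix.updateRow_apply, Pi.single_eq_of_ne hk]
    · intro h
      exact absurd (Finset.mem_univ j) h
  rw [h2, h3]
  ring
end

section
/- Let A be an M×M real matrix with dim ker A = 1. Then there exist vectors v, κ ∈ ℝ^M with ker A = span⟨v⟩, coker A (i.e. ker Aᵀ) = span⟨κ⟩, such that the adjugate matrix satisfies Ad(A) = v · κᵀ. -/
open Matrix Module

/-- If A is a square real matrix with one-dimensional kernel, there are vectors v
spanning ker A and κ spanning ker Aᵀ with Ad(A) = v·κᵀ. -/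
theorem stmt6 (M : ℕ) (A : Matrix (Fin M) (Fin M) ℝ)
    (hdim : Module.finrank ℝ (LinearMap.ker A.mulVecLin) = 1) :
    ∃ v κ : Fin M → ℝ,
      v ≠ 0 ∧ LinearMap.ker A.mulVecLin = Submodule.span ℝ {v} ∧
      κ ≠ 0 ∧ LinearMap.ker A.transpose.mulVecLin = Submodule.span ℝ {κ} ∧
      A.adjugate = Matrix.vecMulVec v κ := by
  classical
  -- the kernel is nontrivial
  have hker_ne : LinearMap.ker A.mulVecLin ≠ ⊥ := by
    intro h; rw [h] at hdim; simp at hdim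
  obtain ⟨w, hw, hw0⟩ := (Submodule.ne_bot_iff _).mp hker_ne
  have hAw : A *ᵥ w = 0 := hw
  have hdet : A.det = 0 := (Matrix.exists_mulVec_eq_zero_iff).mp ⟨w, hw0, hAw⟩
  have hAB : A * A.adjugate = 0 := by rw [Matrix.mul_adjugate, hdet, zero_smul]
  have hBA : A.adjugate * A = 0 := by rw [Matrix.adjugate_mul, hdet, zero_smul]
  -- rank-nullity
  have hfin : finrank ℝ (LinearMap.range A.mulVecLin)
      + finrank ℝ (LinearMap.ker A.mulVecLin) = M := by
    have := LinearMap.finrank_range_add_finrank_ker A.mulVecLin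
    rwa [Module.finrank_fin_fun] at this
  have hrange_ne_top : LinearMap.range A.mulVecLin ≠ ⊤ := by
    intro h
    rw [h, finrank_top, Module.finrank_fin_fun, hdim] at hfin
    omega
  obtain ⟨b, hb⟩ : ∃ b, b ∉ LinearMap.range A.mulVecLin := by
    by_contra h
    push_neg at h
    exact hrange_ne_top (Submodule.eq_top_iff'.mpr h)
  obtain ⟨i, hi⟩ : ∃ i, w i ≠ 0 := Function.ne_iff.mp hw0
  -- kernel is spanned by w
  have hkerw : LinearMap.ker A.mulVecLin = Submodule.span ℝ {w} := by
    refine (Submodule.eq_of_le_of_finrank_le ?_ ?_).symm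
    · rwa [Submodule.span_singleton_le_iff_mem]
    · rw [hdim, finrank_span_singleton hw0]
  -- the key determinant is nonzero
  have hkey : (A.updateCol i b).det ≠ 0 := by
    intro h0
    obtain ⟨x, hx0, hx⟩ := (Matrix.exists_mulVec_eq_zero_iff).mpr h0
    have hsplit : (A.updateCol i b) *ᵥ x
        = A *ᵥ x + x i • (b - A *ᵥ Pi.single i 1) := by
      funext k
      have hterm : ∀ j, (if j = i then b k else A k j) * x j
          = A k j * x j + (if j = i then (b k - A k j) * x j else 0) := by
        intro j; split <;> ring
      simp only [Matrix.mulVec, dotProduct, Matrix.updateCol_apply,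
        Pi.add_apply, Pi.smul_apply, Pi.sub_apply, smul_eq_mul,
        Matrix.mulVec_single, mul_one]
      rw [Finset.sum_congr rfl (fun j _ => hterm j), Finset.sum_add_distrib,
        Finset.sum_ite_eq' Finset.univ i (fun j => (b k - A k j) * x j)]
      simp only [Finset.mem_univ, if_true, MulOpposite.op_one, one_smul, Matrix.col_apply]
      ring
    by_cases hxi : x i = 0
    · have hAx : A *ᵥ x = 0 := by
        rw [hx, hxi, zero_smul, add_zero] at hsplit
        exact hsplit.symm
      have hxmem : x ∈ LinearMap.ker A.mulVecLin := by
        rw [LinearMap.mem_ker, Matrix.mulVecLin_apply, hAx]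
      rw [hkerw, Submodule.mem_span_singleton] at hxmem
      obtain ⟨t, ht⟩ := hxmem
      have : t * w i = 0 := by
        have := congrFun ht i
        simpa [hxi] using this
      have ht0 : t = 0 := by
        rcases mul_eq_zero.mp this with h | h
        · exact h
        · exact absurd h hi
      rw [ht0, zero_smul] at ht
      exact hx0 ht.symm
    · apply hb
      refine ⟨(x i)⁻¹ • (x i • (Pi.single i (1:ℝ) : Fin M → ℝ) - x), ?_⟩
      rw [Matrix.mulVecLin_apply]
      rw [Matrix.mulVec_smul, Matrix.mulVec_sub, Matrix.mulVec_smul]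
      rw [hx] at hsplit
      funext k
      have hk := congrFun hsplit k
      simp only [Pi.add_apply, Pi.smul_apply, Pi.sub_apply, Pi.zero_apply,
        smul_eq_mul, Matrix.mulVec_single, mul_one] at hk ⊢
      field_simp
      linear_combination hk
  -- hence some entry of the adjugate is nonzero
  have hcram : A.cramer b i ≠ 0 := by rwa [Matrix.cramer_apply]
  rw [Matrix.cramer_eq_adjugate_mulVec] at hcram
  have hBb : ∑ j, A.adjugate i j * b j ≠ 0 := hcram
  obtain ⟨j0, hj0⟩ : ∃ j0, A.adjugate i j0 ≠ 0 := by
    by_contra h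
    push_neg at h
    exact hBb (by simp [h])
  set B := A.adjugate with hB
  -- columns of B lie in the kernel of A
  have hcolker : ∀ l, A *ᵥ (fun k => B k l) = 0 := by
    intro l
    funext k
    have : (A *ᵥ fun k => B k l) k = (A * B) k l := by
      simp [Matrix.mulVec, dotProduct, Matrix.mul_apply]
    rw [this, hAB]
    rfl
  set v : Fin M → ℝ := fun k => B k j0 with hv
  have hv0 : v ≠ 0 := by
    intro h
    exact hj0 (congrFun h i)
  have hvker : v ∈ LinearMap.ker A.mulVecLin := by
    rw [LinearMap.mem_ker, Matrix.mulVecLin_apply]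
    exact hcolker j0
  have hkerv : LinearMap.ker A.mulVecLin = Submodule.span ℝ {v} := by
    refine (Submodule.eq_of_le_of_finrank_le ?_ ?_).symm
    · rwa [Submodule.span_singleton_le_iff_mem]
    · rw [hdim, finrank_span_singleton hv0]
  set κ : Fin M → ℝ := fun l => (B i j0)⁻¹ * B i l with hκ
  have hκ0 : κ ≠ 0 := by
    intro h
    have := congrFun h j0
    rw [hκ] at this
    simp only [inv_mul_cancel₀ hj0] at this
    exact one_ne_zero this
  -- the factorization B = v κᵀ
  have hfact : ∀ k l, B k l = v k * κ l := by
    intro k l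
    have hmem : (fun k => B k l) ∈ Submodule.span ℝ {v} := by
      rw [← hkerv, LinearMap.mem_ker, Matrix.mulVecLin_apply]
      exact hcolker l
    obtain ⟨c, hc⟩ := Submodule.mem_span_singleton.mp hmem
    have hci : c * B i j0 = B i l := congrFun hc i
    have hck : c * B k j0 = B k l := congrFun hc k
    have hcval : c = (B i j0)⁻¹ * B i l := by
      field_simp [hj0] at hci ⊢
      linarith [hci]
    rw [← hck, hcval, hκ, hv]
    ring
  -- κ lies in the kernel of Aᵀ
  have hκker : Aᵀ *ᵥ κ = 0 := by
    funext k
    have h1 : (Aᵀ *ᵥ κ) k = (B i j0)⁻¹ * (B * A) i k := by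
      simp only [Matrix.mulVec, dotProduct, Matrix.transpose_apply,
        Matrix.mul_apply, hκ, Finset.mul_sum]
      exact Finset.sum_congr rfl fun l _ => by ring
    rw [h1, hBA]
    simp
  -- finrank of ker of Aᵀ is 1
  have hfinT : finrank ℝ (LinearMap.range Aᵀ.mulVecLin)
      + finrank ℝ (LinearMap.ker Aᵀ.mulVecLin) = M := by
    have := LinearMap.finrank_range_add_finrank_ker Aᵀ.mulVecLin
    rwa [Module.finrank_fin_fun] at this
  have hrk : finrank ℝ (LinearMap.range Aᵀ.mulVecLin)
      = finrank ℝ (LinearMap.range A.mulVecLin) := by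
    have := Matrix.rank_transpose A
    unfold Matrix.rank at this
    exact this
  have hdimT : finrank ℝ (LinearMap.ker Aᵀ.mulVecLin) = 1 := by omega
  have hκmem : κ ∈ LinearMap.ker Aᵀ.mulVecLin := by
    rw [LinearMap.mem_ker, Matrix.mulVecLin_apply, hκker]
  have hkerκ : LinearMap.ker Aᵀ.mulVecLin = Submodule.span ℝ {κ} := by
    refine (Submodule.eq_of_le_of_finrank_le ?_ ?_).symm
    · rwa [Submodule.span_singleton_le_iff_mem]
    · rw [hdimT, finrank_span_singleton hκ0]
  refine ⟨v, κ, hv0, hkerv, hκ0, hkerκ, ?_⟩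
  funext k l
  rw [Matrix.vecMulVec_apply]
  exact hfact k l
end

section
/- Let S = [A | c] be an M×(M+1) real matrix with dim ker S = 1, where A is the first M columns with det A = 0 and one-dimensional kernel spanned by ṽ. Let κ span ker Aᵀ with Ad(A) = ṽ·κᵀ. Then for each j ≤ M, replacing column j of A by c gives det(A[j→c]) = ṽ_j ⟨κ, c⟩; moreover ⟨κ, c⟩ ≠ 0. -/
open Matrix

/-- For S = [A|c] with one-dimensional kernel, det A = 0, ker A spanned by ṽ, and κ
spanning ker Aᵀ normalized so Ad(A) = ṽ·κᵀ: det(A[j→c]) = ṽ_j⟨κ,c⟩ and ⟨κ,c⟩ ≠ 0. -/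
theorem stmt15 (M : ℕ) (A : Matrix (Fin M) (Fin M) ℝ) (c : Fin M → ℝ)
    (S : Matrix (Fin M) (Fin (M + 1)) ℝ)
    (hS : S = Matrix.of fun i => Fin.snoc (A i) (c i))
    (hdimS : Module.finrank ℝ (LinearMap.ker S.mulVecLin) = 1)
    (hdet : A.det = 0)
    (vt κ : Fin M → ℝ) (hvt : vt ≠ 0) (hκ : κ ≠ 0)
    (hkerv : LinearMap.ker A.mulVecLin = Submodule.span ℝ {vt})
    (hkerκ : LinearMap.ker A.transpose.mulVecLin = Submodule.span ℝ {κ})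
    (hadj : A.adjugate = Matrix.vecMulVec vt κ) :
    (∀ j : Fin M, (A.updateCol j c).det = vt j * (κ ⬝ᵥ c)) ∧ κ ⬝ᵥ c ≠ 0 := by
  have hvA : κ ᵥ* A = 0 := by
    have h : κ ∈ LinearMap.ker A.transpose.mulVecLin := by
      rw [hkerκ]; exact Submodule.mem_span_singleton_self κ
    simpa using h
  constructor
  · intro j
    have h1 : (A.updateCol j c).det = Matrix.cramer A c j := (Matrix.cramer_apply A c j).symm
    rw [h1, Matrix.cramer_eq_adjugate_mulVec, hadj]
    simp [Matrix.mulVec, Matrix.vecMulVec_apply, dotProduct, Finset.mul_sum, mul_assoc]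
  · intro h0
    have hsurj : Function.Surjective S.mulVecLin := by
      rw [← LinearMap.range_eq_top]
      apply Submodule.eq_top_of_finrank_eq
      have h2 := LinearMap.finrank_range_add_finrank_ker S.mulVecLin
      simp only [hdimS, Module.finrank_pi, Fintype.card_fin] at h2 ⊢
      omega
    have hκS : κ ᵥ* S = 0 := by
      funext j
      refine Fin.lastCases ?_ ?_ j
      · simpa [hS, Matrix.vecMul, dotProduct] using h0
      · intro i
        have := congrFun hvA i
        simpa [hS, Matrix.vecMul, dotProduct] using this
    obtain ⟨x, hx⟩ := hsurj κ
    have : κ ⬝ᵥ κ = 0 := by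
      nth_rewrite 2 [← hx]
      rw [Matrix.mulVecLin_apply, Matrix.dotProduct_mulVec, hκS, zero_dotProduct]
    exact hκ (by simpa using this)
end

section
/- Let A be an M×M real matrix, c ∈ ℝ^M, v ∈ ℝ^M and κ ∈ ℝ^M with Av = 0, Aᵀκ = 0, Ad(A) = v·κᵀ, and fix an index i with κ_i ≠ 0. Let N be the (M+1)×(M+1) matrix with block form [[Aᵀ, e_{j'}],[cᵀ, 0]] for a unit vector e_{j'}. Then det(N) · κ_i = (-1)^{i+j'+1} ⟨c, κ⟩ · det(A^{∨j'}_{∨i}), where A^{∨j'}_{∨i} is A with column j' and row i removed. -/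
open Matrix

/-- Cramer-type identity for the cokernel: with Av = 0, Aᵀκ = 0, Ad(A) = v·κᵀ, κ_i ≠ 0,
and N the block matrix [[Aᵀ, e_{j'}],[cᵀ, 0]]:
det(N)·κ_i = (-1)^{i+j'+1}⟨c,κ⟩·det(A with row i and column j' removed). -/
theorem stmt17 (M : ℕ) (A : Matrix (Fin (M + 1)) (Fin (M + 1)) ℝ)
    (v κ c : Fin (M + 1) → ℝ)
    (hv : A.mulVec v = 0) (hκ : A.transpose.mulVec κ = 0)
    (hadj : A.adjugate = Matrix.vecMulVec v κ)
    (i : Fin (M + 1)) (hi : κ i ≠ 0) (j' : Fin (M + 1))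
    (N : Matrix (Fin (M + 2)) (Fin (M + 2)) ℝ)
    (hN : N = Matrix.of (Fin.snoc
      (fun r => Fin.snoc (A.transpose r) ((Pi.single j' 1 : Fin (M + 1) → ℝ) r))
      (Fin.snoc c 0))) :
    N.det * κ i =
      (-1 : ℝ) ^ ((i : ℕ) + (j' : ℕ) + 1) * (c ⬝ᵥ κ) *
        (A.submatrix i.succAbove j'.succAbove).det := by
  subst hN
  set N : Matrix (Fin (M + 2)) (Fin (M + 2)) ℝ := Matrix.of (Fin.snoc
      (fun r => Fin.snoc (A.transpose r) ((Pi.single j' 1 : Fin (M + 1) → ℝ) r))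
      (Fin.snoc c 0)) with hNdef
  -- Entry lemmas for N
  have hN1 : ∀ (x : Fin (M + 1)) (y : Fin (M + 1)),
      N x.castSucc y.castSucc = A.transpose x y := by
    intro x y; simp [hNdef]
  have hN2 : ∀ (x : Fin (M + 1)), N x.castSucc (Fin.last (M + 1)) =
      (Pi.single j' 1 : Fin (M + 1) → ℝ) x := by
    intro x; simp [hNdef]
  have hN3 : ∀ (y : Fin (M + 1)), N (Fin.last (M + 1)) y.castSucc = c y := by
    intro y; simp [hNdef]
  have hN4 : N (Fin.last (M + 1)) (Fin.last (M + 1)) = 0 := by simp [hNdef]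
  -- row j' (castSucc'd) picked out; minor B
  set B : Matrix (Fin (M + 1)) (Fin (M + 1)) ℝ :=
    N.submatrix (j'.castSucc).succAbove Fin.castSucc with hBdef
  have hdetN : N.det = (-1 : ℝ) ^ ((j' : ℕ) + (M + 1)) * B.det := by
    rw [Matrix.det_succ_column N (Fin.last (M + 1))]
    rw [Fin.sum_univ_castSucc]
    rw [hN4]
    rw [Finset.sum_eq_single j']
    · rw [hN2 j', Pi.single_eq_same]
      simp only [mul_one, mul_zero, zero_mul, add_zero]
      have he : ((j'.castSucc : Fin (M + 2)) : ℕ) + ((Fin.last (M + 1) : Fin (M + 2)) : ℕ)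
          = (j' : ℕ) + (M + 1) := by simp
      rw [he, hBdef, Fin.succAbove_last]
    · intro b _ hb
      rw [hN2, Pi.single_eq_of_ne hb]
      ring
    · intro h; exact absurd (Finset.mem_univ j') h
  -- B's last row is c
  have hrowlast : (j'.castSucc).succAbove (Fin.last M) = Fin.last (M + 1) := by
    rw [Fin.succAbove_castSucc_of_le j' (Fin.last M) (Fin.le_last j'), Fin.succ_last]
  have hB1 : ∀ q : Fin (M + 1), B (Fin.last M) q = c q := by
    intro q
    simp only [hBdef, Matrix.submatrix_apply, hrowlast]
    exact hN3 q
  -- minors of B along the last row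
  have hminor : ∀ q : Fin (M + 1),
      (B.submatrix (Fin.last M).succAbove q.succAbove).det =
        (A.submatrix q.succAbove j'.succAbove).transpose.det := by
    intro q
    congr 1
    ext r s
    simp only [Matrix.submatrix_apply, Fin.succAbove_last, hBdef,
      Fin.castSucc_succAbove_castSucc, Matrix.transpose_apply]
    rw [hN1]
    rfl
  have hadj' : ∀ q : Fin (M + 1),
      (A.submatrix q.succAbove j'.succAbove).det =
        (-1 : ℝ) ^ ((q : ℕ) + (j' : ℕ)) * (v j' * κ q) := by
    intro q
    have h := Matrix.adjugate_fin_succ_eq_det_submatrix A j' q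
    rw [hadj] at h
    simp only [Matrix.vecMulVec_apply] at h
    have h1 : (-1 : ℝ) ^ ((q : ℕ) + (j' : ℕ)) * (-1 : ℝ) ^ ((q : ℕ) + (j' : ℕ)) = 1 := by
      rw [← pow_add, ← two_mul, pow_mul]; norm_num
    rw [h, ← mul_assoc, h1, one_mul]
  have hdetB : B.det = (-1 : ℝ) ^ ((M : ℕ) + (j' : ℕ)) * (v j' * (c ⬝ᵥ κ)) := by
    rw [Matrix.det_succ_row B (Fin.last M)]
    have hlast : ((Fin.last M : Fin (M + 1)) : ℕ) = M := rfl
    rw [dotProduct, Finset.mul_sum, Finset.mul_sum]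
    refine Finset.sum_congr rfl fun q _ => ?_
    rw [hB1, hminor, Matrix.det_transpose, hadj', hlast]
    have hs : (-1 : ℝ) ^ ((M : ℕ) + (q : ℕ)) * (-1 : ℝ) ^ ((q : ℕ) + (j' : ℕ))
        = (-1 : ℝ) ^ ((M : ℕ) + (j' : ℕ)) := by
      rw [← pow_add]
      have he : (M : ℕ) + (q : ℕ) + ((q : ℕ) + (j' : ℕ)) = 2 * (q : ℕ) + ((M : ℕ) + (j' : ℕ)) := by
        ring
      rw [he, pow_add, pow_mul]
      norm_num
    linear_combination (c q * (v j' * κ q)) * hs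
  -- finish
  have hvk : v j' * κ i = (-1 : ℝ) ^ ((i : ℕ) + (j' : ℕ)) *
      (A.submatrix i.succAbove j'.succAbove).det := by
    have h := Matrix.adjugate_fin_succ_eq_det_submatrix A j' i
    rw [hadj] at h
    simp only [Matrix.vecMulVec_apply] at h
    exact h
  rw [hdetN, hdetB]
  have hs2 : (-1 : ℝ) ^ ((j' : ℕ) + (M + 1)) * (-1 : ℝ) ^ ((M : ℕ) + (j' : ℕ)) = -1 := by
    rw [← pow_add]
    have he : (j' : ℕ) + (M + 1) + ((M : ℕ) + (j' : ℕ)) = 2 * ((j' : ℕ) + M) + 1 := by ring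
    rw [he, pow_succ, pow_mul]
    norm_num
  have hsign : (-1 : ℝ) ^ ((i : ℕ) + (j' : ℕ) + 1) = - (-1 : ℝ) ^ ((i : ℕ) + (j' : ℕ)) := by
    rw [pow_succ]; ring
  rw [hsign]
  linear_combination (v j' * (c ⬝ᵥ κ) * κ i) * hs2 - ((c ⬝ᵥ κ)) * hvk
end
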